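/- arXiv:2207.11326 — 3 statements merged into one kernel-verified Lean document; each statement's English description precedes it below -/
import Mathlib

section
/- For any nonzero integer k, the formal power series kx(e^x − 1)/(e^{kx} − 1) is a Hurwitz series (its exponential generating function coefficients are all integers). -/
open PowerSeries Finset

/-- A Hurwitz series: all exponential generating function coefficients are integers. -/
def IsHurwitz (f : PowerSeries ℚ) : Prop :=
  ∀ n : ℕ, ∃ m : ℤ, (Nat.factorial n : ℚ) * PowerSeries.coeff n f = m

namespace HurwitzAux

/-- The subring of integers inside `ℚ`. -/
def ZZ : Subring ℚ := (Int.castRingHom ℚ).range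

lemma intCast_mem (m : ℤ) : (m : ℚ) ∈ ZZ := ⟨m, rfl⟩

lemma natCast_mem (m : ℕ) : (m : ℚ) ∈ ZZ := by
  simpa using intCast_mem m

/-- A convenient restatement of `IsHurwitz`. -/
def IsH (f : PowerSeries ℚ) : Prop :=
  ∀ n : ℕ, ((Nat.factorial n : ℚ) * PowerSeries.coeff n f) ∈ ZZ

lemma isH_mul {f g : PowerSeries ℚ} (hf : IsH f) (hg : IsH g) : IsH (f * g) := by
  intro n
  rw [coeff_mul, Finset.mul_sum]
  apply Subring.sum_mem
  intro p hp
  rw [Finset.HasAntidiagonal.mem_antidiagonal] at hp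
  have h1 : (n.factorial : ℚ)
      = (n.choose p.1 : ℚ) * ((p.1.factorial : ℚ) * (p.2.factorial : ℚ)) := by
    have h2 : p.1 ≤ n := by omega
    have := Nat.choose_mul_factorial_mul_factorial h2
    have h3 : n - p.1 = p.2 := by omega
    rw [h3] at this
    push_cast [← this]
    ring
  have : (n.factorial : ℚ) * (coeff p.1 f * coeff p.2 g)
      = (n.choose p.1 : ℚ) * (((p.1.factorial : ℚ) * coeff p.1 f)
        * ((p.2.factorial : ℚ) * coeff p.2 g)) := by
    rw [h1]; ring
  rw [this]
  exact Subring.mul_mem _ (natCast_mem _) (Subring.mul_mem _ (hf _) (hg _))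

lemma isH_one : IsH 1 := by
  intro n
  rcases n with _ | n <;> simp [coeff_one, natCast_mem, Subring.zero_mem, Subring.one_mem]

lemma isH_smul (m : ℤ) {f : PowerSeries ℚ} (hf : IsH f) : IsH ((m : ℚ) • f) := by
  intro n
  rw [map_smul, smul_eq_mul]
  have : (n.factorial : ℚ) * ((m : ℚ) * coeff n f)
      = (m : ℚ) * ((n.factorial : ℚ) * coeff n f) := by ring
  rw [this]
  exact Subring.mul_mem _ (intCast_mem _) (hf _)

lemma isH_neg {f : PowerSeries ℚ} (hf : IsH f) : IsH (-f) := by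
  intro n
  rw [map_neg, mul_neg]
  exact Subring.neg_mem _ (hf n)

lemma isH_sum {ι : Type*} {s : Finset ι} {F : ι → PowerSeries ℚ}
    (h : ∀ i ∈ s, IsH (F i)) : IsH (∑ i ∈ s, F i) := by
  intro n
  rw [map_sum, Finset.mul_sum]
  exact Subring.sum_mem _ fun i hi => h i hi n

lemma isH_pow {f : PowerSeries ℚ} (hf : IsH f) : ∀ j : ℕ, IsH (f ^ j)
  | 0 => by simpa using isH_one
  | j + 1 => by
    rw [pow_succ]
    exact isH_mul (isH_pow hf j) hf

lemma isH_exp : IsH (exp ℚ) := by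
  intro n
  rw [coeff_exp]
  have h : ((n.factorial : ℚ)) ≠ 0 := by
    exact_mod_cast Nat.factorial_ne_zero n
  have : (n.factorial : ℚ) * algebraMap ℚ ℚ (1 / n.factorial) = 1 := by
    simp [Algebra.algebraMap_self_apply]
    field_simp
  rw [this]
  exact Subring.one_mem _

lemma isH_rescale (m : ℤ) {f : PowerSeries ℚ} (hf : IsH f) :
    IsH (rescale (m : ℚ) f) := by
  intro n
  rw [coeff_rescale]
  have : (n.factorial : ℚ) * ((m : ℚ) ^ n * coeff n f)
      = ((m ^ n : ℤ) : ℚ) * ((n.factorial : ℚ) * coeff n f) := by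
    push_cast; ring
  rw [this]
  exact Subring.mul_mem _ (intCast_mem _) (hf _)

lemma isH_rescale_nat (i : ℕ) {f : PowerSeries ℚ} (hf : IsH f) :
    IsH (rescale (i : ℚ) f) := by
  simpa using isH_rescale (i : ℤ) hf

lemma d_exp : d⁄dX ℚ (exp ℚ) = exp ℚ := by
  ext n
  rw [coeff_derivative, coeff_exp, coeff_exp]
  have h1 : ((n + 1).factorial : ℚ) ≠ 0 := by exact_mod_cast Nat.factorial_ne_zero _
  have h2 : ((n).factorial : ℚ) ≠ 0 := by exact_mod_cast Nat.factorial_ne_zero _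
  simp only [Algebra.algebraMap_self_apply]
  rw [Nat.factorial_succ]
  push_cast
  field_simp

lemma d_rescale_exp (a : ℚ) :
    d⁄dX ℚ (rescale a (exp ℚ)) = a • rescale a (exp ℚ) := by
  ext n
  rw [coeff_derivative, map_smul, coeff_rescale, coeff_rescale, coeff_exp, coeff_exp]
  have h1 : ((n + 1).factorial : ℚ) ≠ 0 := by exact_mod_cast Nat.factorial_ne_zero _
  have h2 : ((n).factorial : ℚ) ≠ 0 := by exact_mod_cast Nat.factorial_ne_zero _
  simp only [Algebra.algebraMap_self_apply, smul_eq_mul]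
  rw [Nat.factorial_succ, pow_succ]
  push_cast
  field_simp

lemma isH_S : ∀ j : ℕ, IsH (((j.factorial : ℚ))⁻¹ • (exp ℚ - 1) ^ j)
  | 0 => by simpa using isH_one
  | j + 1 => by
    intro n
    rcases n with _ | m
    · have h0 : coeff 0 ((exp ℚ - 1) ^ (j + 1)) = 0 := by
        rw [coeff_zero_eq_constantCoeff, map_pow, map_sub, constantCoeff_exp, map_one]
        simp
      rw [map_smul, h0]
      simp [Subring.zero_mem]
    · have hD1 : d⁄dX ℚ (exp ℚ - 1) = exp ℚ := by
        rw [map_sub, d_exp, Derivation.map_one_eq_zero, sub_zero]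
      have hD : d⁄dX ℚ ((exp ℚ - 1) ^ (j + 1))
          = (j + 1 : ℕ) • (exp ℚ - 1) ^ j • exp ℚ := by
        have h := Derivation.leibniz_pow (d⁄dX ℚ) (exp ℚ - 1) (j + 1)
        rw [Nat.add_sub_cancel, hD1] at h
        exact h
      have key : coeff (m + 1) ((exp ℚ - 1) ^ (j + 1)) * (m + 1 : ℚ)
          = (j + 1 : ℚ) * coeff m ((exp ℚ - 1) ^ j * exp ℚ) := by
        have h := congrArg (coeff m) hD
        rw [coeff_derivative] at h
        rw [h, smul_eq_mul, map_nsmul, nsmul_eq_mul]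
        push_cast
        ring
      have hmem := isH_mul (isH_S j) isH_exp m
      simp only [smul_mul_assoc, map_smul, smul_eq_mul] at hmem ⊢
      have hj1 : ((j + 1).factorial : ℚ) ≠ 0 := by exact_mod_cast Nat.factorial_ne_zero _
      have hj2 : ((j).factorial : ℚ) ≠ 0 := by exact_mod_cast Nat.factorial_ne_zero _
      have goal_eq : ((m + 1).factorial : ℚ) * (((j + 1).factorial : ℚ))⁻¹
            * coeff (m + 1) ((exp ℚ - 1) ^ (j + 1))
          = ((m).factorial : ℚ) * (((j).factorial : ℚ))⁻¹
            * coeff m ((exp ℚ - 1) ^ j * exp ℚ) := by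
        rw [Nat.factorial_succ m, Nat.factorial_succ j]
        push_cast
        field_simp
        linear_combination key
      rw [← mul_assoc, goal_eq, mul_assoc]
      exact hmem

lemma geom_exp (m : ℕ) :
    (exp ℚ - 1) * (∑ i ∈ range m, rescale (i : ℚ) (exp ℚ))
      = rescale (m : ℚ) (exp ℚ) - 1 := by
  have hstep : ∀ i : ℕ, exp ℚ * rescale (i : ℚ) (exp ℚ)
      = rescale ((i + 1 : ℕ) : ℚ) (exp ℚ) := by
    intro i
    have h := exp_mul_exp_eq_exp_add (1 : ℚ) (i : ℚ)
    rw [rescale_one] at h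
    simp only [RingHom.id_apply] at h
    rw [h]
    norm_num [add_comm]
  have h0 : rescale ((0 : ℕ) : ℚ) (exp ℚ) = 1 := by
    simp [rescale_zero, constantCoeff_exp]
  calc (exp ℚ - 1) * (∑ i ∈ range m, rescale (i : ℚ) (exp ℚ))
      = ∑ i ∈ range m, (rescale ((i + 1 : ℕ) : ℚ) (exp ℚ) - rescale (i : ℚ) (exp ℚ)) := by
        rw [Finset.mul_sum]
        apply Finset.sum_congr rfl
        intro i _
        rw [sub_mul, one_mul, hstep i]
    _ = rescale ((m : ℕ) : ℚ) (exp ℚ) - rescale ((0 : ℕ) : ℚ) (exp ℚ) :=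
        Finset.sum_range_sub (fun i => rescale ((i : ℕ) : ℚ) (exp ℚ)) m
    _ = rescale (m : ℚ) (exp ℚ) - 1 := by rw [h0]

lemma exists_R (k : ℤ) (hk : k ≠ 0) :
    ∃ Rs : PowerSeries ℚ, IsH Rs ∧
      (exp ℚ - 1) * Rs = rescale (k : ℚ) (exp ℚ) - 1 := by
  rcases lt_or_gt_of_ne hk with hneg | hpos
  · set m : ℕ := (-k).toNat with hm
    have hmZ : ((m : ℤ)) = -k := Int.toNat_of_nonneg (by omega)
    have hmk : ((m : ℚ)) = -(k : ℚ) := by exact_mod_cast congrArg (Int.cast : ℤ → ℚ) hmZ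
    refine ⟨-(rescale (k : ℚ) (exp ℚ)) * (∑ i ∈ range m, rescale (i : ℚ) (exp ℚ)),
      isH_mul (isH_neg (isH_rescale k isH_exp))
        (isH_sum fun i _ => isH_rescale_nat i isH_exp), ?_⟩
    have h1 : rescale (k : ℚ) (exp ℚ) * rescale (m : ℚ) (exp ℚ) = 1 := by
      rw [exp_mul_exp_eq_exp_add]
      have h2 : (k : ℚ) + (m : ℚ) = 0 := by rw [hmk]; ring
      rw [h2]
      have h3 : rescale ((0 : ℕ) : ℚ) (exp ℚ) = 1 := by
        simp [rescale_zero, constantCoeff_exp]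
      simp only [Nat.cast_zero] at h3
      exact h3
    have h2 := geom_exp m
    calc (exp ℚ - 1) * (-(rescale (k : ℚ) (exp ℚ)) * (∑ i ∈ range m, rescale (i : ℚ) (exp ℚ)))
        = -(rescale (k : ℚ) (exp ℚ))
            * ((exp ℚ - 1) * (∑ i ∈ range m, rescale (i : ℚ) (exp ℚ))) := by ring
      _ = -(rescale (k : ℚ) (exp ℚ)) * (rescale (m : ℚ) (exp ℚ) - 1) := by rw [h2]
      _ = rescale (k : ℚ) (exp ℚ)
            - rescale (k : ℚ) (exp ℚ) * rescale (m : ℚ) (exp ℚ) := by ring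
      _ = rescale (k : ℚ) (exp ℚ) - 1 := by rw [h1]
  · set m : ℕ := k.toNat with hm
    have hmZ : ((m : ℤ)) = k := Int.toNat_of_nonneg (by omega)
    have hmk : ((m : ℚ)) = (k : ℚ) := by exact_mod_cast congrArg (Int.cast : ℤ → ℚ) hmZ
    refine ⟨∑ i ∈ range m, rescale (i : ℚ) (exp ℚ),
      isH_sum fun i _ => isH_rescale_nat i isH_exp, ?_⟩
    rw [geom_exp m, hmk]

lemma log_trunc (k : ℤ) (N : ℕ) :
    ∀ m : ℕ, m ≤ N →
    coeff m (∑ j ∈ range N,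
        (((-1 : ℚ) ^ j / (j + 1)) • (rescale (k : ℚ) (exp ℚ) - 1) ^ (j + 1)))
      = coeff m ((k : ℚ) • X) := by
  set u : PowerSeries ℚ := rescale (k : ℚ) (exp ℚ) - 1 with hu
  have hu0 : constantCoeff u = 0 := by
    rw [hu, map_sub, map_one]
    have h : constantCoeff (rescale (k : ℚ) (exp ℚ)) = 1 := by
      rw [← coeff_zero_eq_constantCoeff, coeff_rescale]
      simp [coeff_exp]
    rw [h, sub_self]
  have hXu : (X : PowerSeries ℚ) ∣ u := X_dvd_iff.mpr hu0
  have hDu : d⁄dX ℚ u = (k : ℚ) • (u + 1) := by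
    rw [hu, map_sub, Derivation.map_one_eq_zero, sub_zero, d_rescale_exp]
    congr 1
    rw [sub_add_cancel]
  have hgeom : (∑ j ∈ range N, (-u) ^ j) * (u + 1) = 1 - (-u) ^ N := by
    have h := geom_sum_mul (-u) N
    linear_combination -h
  have hterm : ∀ j : ℕ, d⁄dX ℚ ((((-1 : ℚ) ^ j / (j + 1)) • u ^ (j + 1)))
      = (k : ℚ) • ((-u) ^ j * (u + 1)) := by
    intro j
    rw [Derivation.map_smul, Derivation.leibniz_pow, Nat.add_sub_cancel, hDu]
    rw [smul_eq_mul, nsmul_eq_mul]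
    simp only [Algebra.smul_def]
    have hnat : ((j + 1 : ℕ) : ℚ⟦X⟧) = algebraMap ℚ ℚ⟦X⟧ (((j + 1 : ℕ)) : ℚ) := by
      rw [map_natCast]
    have hC : algebraMap ℚ ℚ⟦X⟧ ((-1 : ℚ) ^ j / (j + 1))
        * algebraMap ℚ ℚ⟦X⟧ (((j + 1 : ℕ)) : ℚ) = algebraMap ℚ ℚ⟦X⟧ ((-1 : ℚ) ^ j) := by
      rw [← map_mul]
      congr 1
      have : ((j : ℚ) + 1) ≠ 0 := by positivity
      push_cast
      field_simp
    have hC2 : ((-u) ^ j : ℚ⟦X⟧) = algebraMap ℚ ℚ⟦X⟧ ((-1 : ℚ) ^ j) * u ^ j := by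
      rw [neg_pow, map_pow, map_neg, map_one]
    rw [hnat, hC2]
    linear_combination (u ^ j * (u + 1) * algebraMap ℚ ℚ⟦X⟧ ((k : ℚ))) * hC
  have hDL : d⁄dX ℚ (∑ j ∈ range N, (((-1 : ℚ) ^ j / (j + 1)) • u ^ (j + 1)))
      = (k : ℚ) • (1 - (-u) ^ N) := by
    rw [map_sum]
    calc ∑ j ∈ range N, d⁄dX ℚ ((((-1 : ℚ) ^ j / (j + 1)) • u ^ (j + 1)))
        = ∑ j ∈ range N, (k : ℚ) • ((-u) ^ j * (u + 1)) :=
          Finset.sum_congr rfl fun j _ => hterm j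
      _ = (k : ℚ) • ((∑ j ∈ range N, (-u) ^ j) * (u + 1)) := by
          rw [← Finset.smul_sum, ← Finset.sum_mul]
      _ = (k : ℚ) • (1 - (-u) ^ N) := by rw [hgeom]
  intro m hm
  rcases m with _ | i
  · have hz : ∀ j ∈ range N, coeff 0 ((((-1 : ℚ) ^ j / (j + 1)) • u ^ (j + 1))) = 0 := by
      intro j _
      rw [map_smul, coeff_zero_eq_constantCoeff, map_pow, hu0, zero_pow (Nat.succ_ne_zero j),
        smul_zero]
    rw [map_sum, Finset.sum_eq_zero hz]
    simp
  · have hcoeff := congrArg (coeff i) hDL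
    rw [coeff_derivative] at hcoeff
    have hvanish : coeff i ((-u) ^ N) = 0 := by
      have hd : (X : ℚ⟦X⟧) ^ N ∣ (-u) ^ N := pow_dvd_pow_of_dvd (Dvd.dvd.neg_right hXu) N
      exact X_pow_dvd_iff.mp hd i (by omega)
    rw [map_smul, map_sub, hvanish, sub_zero] at hcoeff
    rcases i with _ | p
    · rw [coeff_one] at hcoeff
      norm_num at hcoeff
      rw [map_smul, coeff_X, if_pos rfl, smul_eq_mul, mul_one]
      simpa using hcoeff
    · rw [coeff_one, if_neg (Nat.succ_ne_zero p), smul_zero] at hcoeff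
      have hne : ((p + 1 : ℕ) : ℚ) + 1 ≠ 0 := by positivity
      have h0 : coeff (p + 1 + 1)
          (∑ j ∈ range N, (((-1 : ℚ) ^ j / (j + 1)) • u ^ (j + 1))) = 0 :=
        by exact (mul_eq_zero.mp hcoeff).resolve_right hne
      rw [h0, map_smul, coeff_X, if_neg (by omega), smul_zero]

end HurwitzAux

/-- For nonzero integer `k`, the series `kx (e^x - 1)/(e^{kx} - 1)` is a Hurwitz series. -/
theorem hurwitz_kx (k : ℤ) (hk : k ≠ 0) (f : PowerSeries ℚ)
    (hf : f * (PowerSeries.rescale (k : ℚ) (PowerSeries.exp ℚ) - 1) =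
      ((k : ℚ) • (PowerSeries.X : PowerSeries ℚ)) * (PowerSeries.exp ℚ - 1)) :
    IsHurwitz f := by
  classical
  obtain ⟨Rs, hRsH, hRe⟩ := HurwitzAux.exists_R k hk
  intro n
  set N : ℕ := n + 1 with hN
  set u : PowerSeries ℚ := rescale (k : ℚ) (exp ℚ) - 1 with hu
  set G : PowerSeries ℚ := ∑ j ∈ range N,
      ((((-1 : ℤ) ^ j * j.factorial : ℤ)) : ℚ)
        • (((((j + 1).factorial : ℚ))⁻¹ • (exp ℚ - 1) ^ (j + 1)) * Rs ^ j) with hG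
  have hGH : HurwitzAux.IsH G :=
    HurwitzAux.isH_sum fun j _ => HurwitzAux.isH_smul _
      (HurwitzAux.isH_mul (HurwitzAux.isH_S (j + 1)) (HurwitzAux.isH_pow hRsH j))
  have hG_eq : G = ∑ j ∈ range N, (((-1 : ℚ) ^ j / (j + 1)) • ((exp ℚ - 1) * u ^ j)) := by
    rw [hG]
    apply Finset.sum_congr rfl
    intro j _
    have hpow : (exp ℚ - 1) ^ (j + 1) * Rs ^ j = (exp ℚ - 1) * u ^ j := by
      rw [pow_succ', mul_assoc, ← mul_pow, hRe]
    rw [smul_mul_assoc, smul_smul, hpow]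
    congr 1
    rw [Nat.factorial_succ]
    have hj1 : ((j : ℚ) + 1) ≠ 0 := by positivity
    have hj2 : ((j.factorial : ℚ)) ≠ 0 := by exact_mod_cast Nat.factorial_ne_zero _
    push_cast
    field_simp
  have hGu : G * u = (exp ℚ - 1)
      * (∑ j ∈ range N, (((-1 : ℚ) ^ j / (j + 1)) • u ^ (j + 1))) := by
    rw [hG_eq, Finset.sum_mul, Finset.mul_sum]
    apply Finset.sum_congr rfl
    intro j _
    rw [smul_mul_assoc, mul_assoc, ← pow_succ, mul_smul_comm]
  have hdiff : (X : ℚ⟦X⟧) ^ (N + 1)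
      ∣ ((k : ℚ) • X - ∑ j ∈ range N, (((-1 : ℚ) ^ j / (j + 1)) • u ^ (j + 1))) := by
    rw [PowerSeries.X_pow_dvd_iff]
    intro m hmN
    rw [map_sub, HurwitzAux.log_trunc k N m (by omega), sub_self]
  have hfu : (f - G) * u = (exp ℚ - 1)
      * ((k : ℚ) • X - ∑ j ∈ range N, (((-1 : ℚ) ^ j / (j + 1)) • u ^ (j + 1))) := by
    rw [sub_mul, hGu]
    rw [hu] at hf ⊢
    rw [hf]
    ring
  have hdvd2 : (X : ℚ⟦X⟧) ^ (N + 1) ∣ (f - G) * u := by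
    rw [hfu]
    exact Dvd.dvd.mul_left hdiff _
  have hu0 : constantCoeff u = 0 := by
    rw [hu, map_sub, map_one]
    have h : constantCoeff (rescale (k : ℚ) (exp ℚ)) = 1 := by
      rw [← coeff_zero_eq_constantCoeff, coeff_rescale]
      simp [coeff_exp]
    rw [h, sub_self]
  obtain ⟨w, hw⟩ := PowerSeries.X_dvd_iff.mpr hu0
  have hw1 : constantCoeff w = (k : ℚ) := by
    have h1 : coeff 1 u = (k : ℚ) := by
      rw [hu, map_sub, coeff_rescale, coeff_exp, coeff_one]
      norm_num
    have h2 : coeff 1 (X * w) = constantCoeff w := by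
      rw [← coeff_zero_eq_constantCoeff]
      exact coeff_succ_X_mul 0 w
    rw [hw, h2] at h1
    exact h1
  have hwu : IsUnit w := by
    rw [PowerSeries.isUnit_iff_constantCoeff, hw1]
    exact isUnit_iff_ne_zero.mpr (by exact_mod_cast hk)
  have hX : (X : ℚ⟦X⟧) ≠ 0 := X_ne_zero
  have hdvd3 : (X : ℚ⟦X⟧) ^ N ∣ (f - G) * w := by
    have h1 : (X : ℚ⟦X⟧) * (X : ℚ⟦X⟧) ^ N ∣ (X : ℚ⟦X⟧) * ((f - G) * w) := by
      have e1 : (X : ℚ⟦X⟧) * ((f - G) * w) = (f - G) * u := by rw [hw]; ring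
      rw [e1, ← pow_succ']
      exact hdvd2
    exact (mul_dvd_mul_iff_left hX).mp h1
  have hdvd4 : (X : ℚ⟦X⟧) ^ N ∣ (f - G) := (IsUnit.dvd_mul_right hwu).mp hdvd3
  have hcoeff0 : coeff n (f - G) = 0 :=
    PowerSeries.X_pow_dvd_iff.mp hdvd4 n (by omega)
  have hfeq : coeff n f = coeff n G := by
    rw [map_sub] at hcoeff0
    linarith
  obtain ⟨m, hm⟩ := hGH n
  refine ⟨m, ?_⟩
  rw [hfeq, ← hm]
  rfl
end

section
/- If f(x) = ∑_{n≥1} a_n x^n/n! is a Hurwitz series with zero constant term, then for every positive integer k, f(x)^k / k! is also a Hurwitz series. -/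
open PowerSeries

private lemma isHurwitz_mul {f g : PowerSeries ℚ} (hf : IsHurwitz f) (hg : IsHurwitz g) :
    IsHurwitz (f * g) := by
  intro n
  choose a ha using hf
  choose b hb using hg
  refine ⟨∑ p ∈ Finset.HasAntidiagonal.antidiagonal n, (n.choose p.1 : ℤ) * a p.1 * b p.2, ?_⟩
  rw [PowerSeries.coeff_mul, Finset.mul_sum]
  push_cast
  refine Finset.sum_congr rfl fun p hp => ?_
  rw [Finset.HasAntidiagonal.mem_antidiagonal] at hp
  have key : (n.choose p.1 : ℚ) * p.1.factorial * p.2.factorial = n.factorial := by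
    have h1 : p.1 ≤ n := by omega
    have h2 : n - p.1 = p.2 := by omega
    have h3 := Nat.choose_mul_factorial_mul_factorial h1
    rw [h2] at h3
    exact_mod_cast h3
  rw [← key, ← ha, ← hb]
  ring

private lemma isHurwitz_deriv {f : PowerSeries ℚ} (hf : IsHurwitz f) :
    IsHurwitz (d⁄dX ℚ f) := by
  intro n
  obtain ⟨m, hm⟩ := hf (n + 1)
  refine ⟨m, ?_⟩
  rw [PowerSeries.coeff_derivative, ← hm, Nat.factorial_succ]
  push_cast; ring

/-- If `f` is Hurwitz with zero constant term, then `f^k/k!` is Hurwitz. -/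
theorem isHurwitz_pow_div_factorial (f : PowerSeries ℚ) (hf : IsHurwitz f)
    (h0 : PowerSeries.constantCoeff f = 0) (k : ℕ) (hk : 0 < k) :
    IsHurwitz ((Nat.factorial k : ℚ)⁻¹ • f ^ k) := by
  clear hk
  induction k with
  | zero =>
    intro n
    simp only [Nat.factorial_zero, Nat.cast_one, inv_one, one_smul, pow_zero]
    rcases n with _ | n
    · exact ⟨1, by simp⟩
    · exact ⟨0, by simp [PowerSeries.coeff_one]⟩
  | succ k ih =>
    intro n
    rcases n with _ | n
    · refine ⟨0, ?_⟩
      simp [PowerSeries.coeff_zero_eq_constantCoeff, map_pow, h0]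
    · have hd : d⁄dX ℚ (f ^ (k + 1)) = (k + 1) • (f ^ k * d⁄dX ℚ f) := by
        have h := Derivation.leibniz_pow (d⁄dX ℚ) f (k + 1)
        rw [Nat.succ_sub_one, smul_eq_mul] at h
        exact h
      have hcoeff : (n + 1 : ℚ) * PowerSeries.coeff (n + 1) (f ^ (k + 1))
          = (k + 1) * PowerSeries.coeff n (f ^ k * d⁄dX ℚ f) := by
        have h := congrArg (PowerSeries.coeff n) hd
        rw [PowerSeries.coeff_derivative, map_nsmul, nsmul_eq_mul] at h
        push_cast at h
        linarith
      obtain ⟨m, hm⟩ := isHurwitz_mul ih (isHurwitz_deriv hf) n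
      refine ⟨m, ?_⟩
      rw [smul_mul_assoc] at hm
      simp only [map_smul, smul_eq_mul] at hm ⊢
      have hkf : ((k + 1).factorial : ℚ) ≠ 0 := by positivity
      have hkf' : ((k).factorial : ℚ) ≠ 0 := by positivity
      rw [← hm, Nat.factorial_succ (k), Nat.factorial_succ n]
      push_cast
      field_simp
      linear_combination hcoeff
end

section
/- If f(x) = ∑ a_n x^n/n! is a Hurwitz series with constant term a_0 = 1, then 1/f(x) is also a Hurwitz series. -/
/-- If `f` is Hurwitz with constant term `1`, then `1/f` is Hurwitz. -/
theorem isHurwitz_inv (f : PowerSeries ℚ) (hf : IsHurwitz f)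
    (h1 : PowerSeries.constantCoeff f = 1) :
    IsHurwitz f⁻¹ := by
  intro n
  induction n using Nat.strong_induction_on with
  | _ n ih =>
    rcases Nat.eq_zero_or_pos n with rfl | hn
    · refine ⟨1, ?_⟩
      simp [PowerSeries.coeff_zero_eq_constantCoeff, PowerSeries.constantCoeff_inv, h1]
    · rw [PowerSeries.coeff_inv, if_neg hn.ne', h1, inv_one]
      set R := (Int.castRingHom ℚ).range with hR
      have key : (Nat.factorial n : ℚ) *
          (-1 * ∑ x ∈ Finset.HasAntidiagonal.antidiagonal n,
            if x.2 < n then PowerSeries.coeff x.1 f * PowerSeries.coeff x.2 f⁻¹ else 0) ∈ R := by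
        rw [neg_one_mul, mul_neg, Finset.mul_sum]
        refine neg_mem (Subring.sum_mem _ fun x hx => ?_)
        rw [Finset.HasAntidiagonal.mem_antidiagonal] at hx
        split_ifs with hx2
        · obtain ⟨a, ha⟩ := hf x.1
          obtain ⟨b, hb⟩ := ih x.2 hx2
          have h := Nat.add_choose_mul_factorial_mul_factorial x.1 x.2
          rw [hx] at h
          have hfac : (Nat.factorial n : ℚ) =
              (Nat.choose n x.2 : ℚ) * Nat.factorial x.1 * Nat.factorial x.2 := by
            exact_mod_cast h.symm
          have : (Nat.factorial n : ℚ) *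
              (PowerSeries.coeff x.1 f * PowerSeries.coeff x.2 f⁻¹) =
              (Nat.choose n x.2 : ℚ) * ((Nat.factorial x.1 : ℚ) * PowerSeries.coeff x.1 f) *
                ((Nat.factorial x.2 : ℚ) * PowerSeries.coeff x.2 f⁻¹) := by
            rw [hfac]; ring
          rw [this, ha, hb]
          exact Subring.mul_mem _ (Subring.mul_mem _ ⟨(Nat.choose n x.2 : ℤ), by simp⟩
            ⟨a, rfl⟩) ⟨b, rfl⟩
        · rw [mul_zero]; exact zero_mem R
      obtain ⟨m, hm⟩ := key
      exact ⟨m, hm.symm⟩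
end
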